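/- For subsets A, B of {1,…,n−1} with A having no two consecutive elements and A ⊆ B ∪ (B+1), the number of subsets C ⊆ B with A ⊆ C △ (C+1) equals 2^{|B \ (A ∪ (A−1))| + |{a ∈ A : a−1 ∈ B and a ∈ B}|}, where B+1 = {b+1 : b ∈ B} \ {n}, A−1 = {a−1 : a ∈ A} \ {0}, and △ is symmetric difference. In particular, if A ⊄ B ∪ (B+1) then no such C exists. -/

import Mathlib

/-- `S + 1 = {s+1 : s ∈ S} \ {n}`. -/
def shiftUp (n : ℕ) (S : Finset ℕ) : Finset ℕ := (S.image (· + 1)).erase n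

/-- `S − 1 = {s−1 : s ∈ S} \ {0}`. -/
def shiftDown (S : Finset ℕ) : Finset ℕ := (S.image (· - 1)).erase 0

lemma mem_shiftUp' {n x : ℕ} {S : Finset ℕ} (hx : 1 ≤ x) :
    x ∈ shiftUp n S ↔ x ≠ n ∧ x - 1 ∈ S := by
  simp only [shiftUp, Finset.mem_erase, Finset.mem_image]
  constructor
  · rintro ⟨h, s, hs, rfl⟩; exact ⟨h, by simpa using hs⟩
  · rintro ⟨h, hs⟩; exact ⟨h, x - 1, hs, by omega⟩

lemma mem_shiftDown' {x : ℕ} {S : Finset ℕ} :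
    x ∈ shiftDown S ↔ x ≠ 0 ∧ x + 1 ∈ S := by
  simp only [shiftDown, Finset.mem_erase, Finset.mem_image]
  constructor
  · rintro ⟨h, s, hs, rfl⟩
    have hs1 : s - 1 + 1 = s := by omega
    exact ⟨h, hs1 ▸ hs⟩
  · rintro ⟨h, hs⟩; exact ⟨h, x + 1, hs, by omega⟩

/-- For `A, B ⊆ {1,…,n−1}` with `A` having no two consecutive elements and
`A ⊆ B ∪ (B+1)`, the number of `C ⊆ B` with `A ⊆ C △ (C+1)` equals
`2^{|B \ (A ∪ (A−1))| + |{a ∈ A : a−1 ∈ B and a ∈ B}|}`; if `A ⊄ B ∪ (B+1)` there is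
no such `C`. -/
theorem count_peak_subsets (n : ℕ) (A B : Finset ℕ)
    (hA : A ⊆ Finset.Icc 1 (n - 1)) (hB : B ⊆ Finset.Icc 1 (n - 1))
    (hcons : ∀ i : ℕ, ¬(i ∈ A ∧ i + 1 ∈ A)) :
    (A ⊆ B ∪ shiftUp n B →
      (B.powerset.filter
          (fun C => A ⊆ (C \ shiftUp n C) ∪ (shiftUp n C \ C))).card =
        2 ^ ((B \ (A ∪ shiftDown A)).card +
          (A.filter (fun a => a - 1 ∈ B ∧ a ∈ B)).card)) ∧
    (¬(A ⊆ B ∪ shiftUp n B) →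
      (B.powerset.filter
          (fun C => A ⊆ (C \ shiftUp n C) ∪ (shiftUp n C \ C))).card = 0) := by
  have hA' : ∀ a ∈ A, 1 ≤ a ∧ a < n := by
    intro a ha; have := hA ha; rw [Finset.mem_Icc] at this; omega
  have hB' : ∀ b ∈ B, 1 ≤ b ∧ b < n := by
    intro b hb; have := hB hb; rw [Finset.mem_Icc] at this; omega
  -- Rewrite the peak condition
  have hcond : ∀ C ∈ B.powerset,
      (A ⊆ (C \ shiftUp n C) ∪ (shiftUp n C \ C)) ↔
        ∀ a ∈ A, (a ∈ C ↔ a - 1 ∉ C) := by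
    intro C hC
    rw [Finset.mem_powerset] at hC
    constructor
    · intro h a ha
      have h1 := (hA' a ha).1
      have h2 := (hA' a ha).2
      have hh := h ha
      simp only [Finset.mem_union, Finset.mem_sdiff, mem_shiftUp' h1] at hh
      constructor
      · rintro hc hd
        rcases hh with ⟨_, h3⟩ | ⟨⟨_, _⟩, h4⟩
        · exact h3 ⟨by omega, hd⟩
        · exact h4 hc
      · intro hd
        rcases hh with ⟨hc, _⟩ | ⟨⟨_, h3⟩, _⟩
        · exact hc
        · exact absurd h3 hd
    · intro h a ha
      have h1 := (hA' a ha).1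
      have h2 := (hA' a ha).2
      simp only [Finset.mem_union, Finset.mem_sdiff, mem_shiftUp' h1]
      by_cases hc : a ∈ C
      · exact Or.inl ⟨hc, fun hx => ((h a ha).1 hc) hx.2⟩
      · refine Or.inr ⟨⟨by omega, ?_⟩, hc⟩
        by_contra hd
        exact hc ((h a ha).2 hd)
  have key : B.powerset.filter
        (fun C => A ⊆ (C \ shiftUp n C) ∪ (shiftUp n C \ C)) =
      B.powerset.filter (fun C => ∀ a ∈ A, (a ∈ C ↔ a - 1 ∉ C)) := by
    ext C
    simp only [Finset.mem_filter]
    constructor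
    · rintro ⟨h1, h2⟩; exact ⟨h1, (hcond C h1).1 h2⟩
    · rintro ⟨h1, h2⟩; exact ⟨h1, (hcond C h1).2 h2⟩
  have hnc1 : ∀ a ∈ A, a - 1 ∉ A := by
    intro a ha h
    have h1 := (hA' a ha).1
    refine hcons (a - 1) ⟨h, ?_⟩
    have h2 : a - 1 + 1 = a := by omega
    rwa [h2]
  have hnc2 : ∀ a ∈ A, a + 1 ∉ A := fun a ha h => hcons a ⟨ha, h⟩
  constructor
  · -- main count
    intro hsub
    rw [key]
    set X := B \ (A ∪ shiftDown A) with hX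
    set Y := A.filter (fun a => a - 1 ∈ B ∧ a ∈ B) with hY
    have memX : ∀ x, x ∈ X ↔ x ∈ B ∧ x ∉ A ∧ ¬(x ≠ 0 ∧ x + 1 ∈ A) := by
      intro x
      simp only [hX, Finset.mem_sdiff, Finset.mem_union, mem_shiftDown', not_or]
    have memY : ∀ a, a ∈ Y ↔ a ∈ A ∧ a - 1 ∈ B ∧ a ∈ B := by
      intro a; simp only [hY, Finset.mem_filter, and_assoc]
    have hYA : Y ⊆ A := Finset.filter_subset _ _
    have hdisj : Disjoint X Y := by
      rw [Finset.disjoint_left]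
      intro x hx hxY
      exact ((memX x).1 hx).2.1 (hYA hxY)
    have hRHS : (2 : ℕ) ^ (X.card + Y.card) = (X ∪ Y).powerset.card := by
      rw [Finset.card_powerset, Finset.card_union_of_disjoint hdisj]
    rw [hRHS]
    set g : Finset ℕ → Finset ℕ := fun S =>
      S ∪ (Y \ S).image (· - 1) ∪ ((A \ Y) ∩ B) ∪
        ((A \ Y).filter (· ∉ B)).image (· - 1) with hg
    have memg : ∀ (S : Finset ℕ) (x : ℕ), x ∈ g S ↔
        x ∈ S ∨ (∃ a, a ∈ Y ∧ a ∉ S ∧ a - 1 = x) ∨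
        (x ∈ A ∧ x ∉ Y ∧ x ∈ B) ∨
        (∃ a, a ∈ A ∧ a ∉ Y ∧ a ∉ B ∧ a - 1 = x) := by
      intro S x
      simp only [hg]
      constructor
      · intro hx
        rcases Finset.mem_union.1 hx with hx | hx
        · rcases Finset.mem_union.1 hx with hx | hx
          · rcases Finset.mem_union.1 hx with hx | hx
            · exact Or.inl hx
            · obtain ⟨a, ha, rfl⟩ := Finset.mem_image.1 hx
              obtain ⟨h1, h2⟩ := Finset.mem_sdiff.1 ha
              exact Or.inr (Or.inl ⟨a, h1, h2, rfl⟩)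
          · obtain ⟨h1, h2⟩ := Finset.mem_inter.1 hx
            obtain ⟨h3, h4⟩ := Finset.mem_sdiff.1 h1
            exact Or.inr (Or.inr (Or.inl ⟨h3, h4, h2⟩))
        · obtain ⟨a, ha, rfl⟩ := Finset.mem_image.1 hx
          obtain ⟨h1, h2⟩ := Finset.mem_filter.1 ha
          obtain ⟨h3, h4⟩ := Finset.mem_sdiff.1 h1
          exact Or.inr (Or.inr (Or.inr ⟨a, h3, h4, h2, rfl⟩))
      · intro hx
        rcases hx with h | ⟨a, h1, h2, h3⟩ | ⟨h1, h2, h3⟩ | ⟨a, h1, h2, h3, h4⟩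
        · exact Finset.mem_union.2 (Or.inl (Finset.mem_union.2 (Or.inl
            (Finset.mem_union.2 (Or.inl h)))))
        · exact Finset.mem_union.2 (Or.inl (Finset.mem_union.2 (Or.inl
            (Finset.mem_union.2 (Or.inr
              (Finset.mem_image.2 ⟨a, Finset.mem_sdiff.2 ⟨h1, h2⟩, h3⟩))))))
        · exact Finset.mem_union.2 (Or.inl (Finset.mem_union.2 (Or.inr
            (Finset.mem_inter.2 ⟨Finset.mem_sdiff.2 ⟨h1, h2⟩, h3⟩))))
        · exact Finset.mem_union.2 (Or.inr (Finset.mem_image.2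
            ⟨a, Finset.mem_filter.2 ⟨Finset.mem_sdiff.2 ⟨h1, h2⟩, h3⟩, h4⟩))
    apply Finset.card_nbij' (fun C => C ∩ (X ∪ Y)) g
    · -- forward maps into powerset
      intro C _
      rw [Finset.mem_coe, Finset.mem_powerset]
      exact Finset.inter_subset_right
    · -- g maps into the filtered set
      intro S hS
      rw [Finset.mem_coe, Finset.mem_powerset] at hS
      rw [Finset.mem_coe, Finset.mem_filter, Finset.mem_powerset]
      have hgB : g S ⊆ B := by
        intro x hx
        rw [memg] at hx
        rcases hx with hx | ⟨a, haY, _, rfl⟩ | ⟨_, _, hx⟩ | ⟨a, haA, _, hnB, rfl⟩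
        · rcases Finset.mem_union.1 (hS hx) with h | h
          · exact ((memX x).1 h).1
          · exact ((memY x).1 h).2.2
        · exact ((memY a).1 haY).2.1
        · exact hx
        · have := hsub haA
          rcases Finset.mem_union.1 this with h | h
          · exact absurd h hnB
          · exact ((mem_shiftUp' (hA' a haA).1).1 h).2
      refine ⟨hgB, ?_⟩
      intro a ha
      have h1 := (hA' a ha).1
      -- a ∈ S → a ∈ Y
      have haS : a ∈ S → a ∈ Y := by
        intro h
        rcases Finset.mem_union.1 (hS h) with h' | h'
        · exact absurd ha ((memX a).1 h').2.1
        · exact h'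
      -- a - 1 ∉ S
      have ha1S : a - 1 ∉ S := by
        intro h
        rcases Finset.mem_union.1 (hS h) with h' | h'
        · have := (memX (a - 1)).1 h'
          have hb1 := (hB' _ this.1).1
          exact this.2.2 ⟨by omega, by
            have : a - 1 + 1 = a := by omega
            rwa [this]⟩
        · exact hnc1 a ha (hYA h')
      have hagS : a ∈ g S ↔ (a ∈ S ∨ (a ∈ A ∧ a ∉ Y ∧ a ∈ B)) := by
        rw [memg]
        constructor
        · rintro (h | ⟨a', ha', _, rfl⟩ | h | ⟨a', ha', _, _, rfl⟩)
          · exact Or.inl h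
          · have h1' := (hA' a' (hYA ha')).1
            have : a' = (a' - 1) + 1 := by omega
            exact absurd (this ▸ hYA ha') (hnc2 _ ha)
          · exact Or.inr h
          · have h1' := (hA' a' ha').1
            have : a' = (a' - 1) + 1 := by omega
            exact absurd (this ▸ ha') (hnc2 _ ha)
        · rintro (h | h)
          · exact Or.inl h
          · exact Or.inr (Or.inr (Or.inl h))
      have ha1gS : a - 1 ∈ g S ↔ ((a ∈ Y ∧ a ∉ S) ∨ (a ∉ Y ∧ a ∉ B)) := by
        rw [memg]
        constructor
        · rintro (h | ⟨a', ha', hns, heq⟩ | ⟨h, _, _⟩ | ⟨a', ha', hnY, hnB, heq⟩)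
          · exact absurd h ha1S
          · have h1' := (hA' a' (hYA ha')).1
            have : a' = a := by omega
            exact Or.inl ⟨this ▸ ha', this ▸ hns⟩
          · exact absurd h (hnc1 a ha)
          · have h1' := (hA' a' ha').1
            have : a' = a := by omega
            exact Or.inr ⟨this ▸ hnY, this ▸ hnB⟩
        · rintro (⟨h, hns⟩ | ⟨hnY, hnB⟩)
          · exact Or.inr (Or.inl ⟨a, h, hns, rfl⟩)
          · exact Or.inr (Or.inr (Or.inr ⟨a, ha, hnY, hnB, rfl⟩))
      rw [hagS, ha1gS]
      by_cases hy : a ∈ Y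
      · constructor
        · rintro (h | ⟨_, hnY, _⟩)
          · rintro (⟨_, hns⟩ | ⟨hnY, _⟩)
            · exact hns h
            · exact hnY hy
          · exact absurd hy hnY
        · intro h
          left
          by_contra hns
          exact h (Or.inl ⟨hy, hns⟩)
      · have hns : a ∉ S := fun h => hy (haS h)
        constructor
        · rintro (h | ⟨_, _, hb⟩)
          · exact absurd h hns
          · rintro (⟨hy', _⟩ | ⟨_, hnB⟩)
            · exact hy hy'
            · exact hnB hb
        · intro h
          refine Or.inr ⟨ha, hy, ?_⟩
          by_contra hnB
          exact h (Or.inr ⟨hy, hnB⟩)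
    · -- left inverse : g (C ∩ (X ∪ Y)) = C
      intro C hC
      rw [Finset.mem_coe, Finset.mem_filter, Finset.mem_powerset] at hC
      obtain ⟨hCB, hQ⟩ := hC
      apply Finset.Subset.antisymm
      · intro x hx
        rw [memg] at hx
        rcases hx with hx | ⟨a, haY, hns, rfl⟩ | ⟨hxA, hxY, hxB⟩ | ⟨a, haA, hnY, hnB, rfl⟩
        · exact (Finset.mem_inter.1 hx).1
        · have hm := (memY a).1 haY
          have hnc : a ∉ C := fun h =>
            hns (Finset.mem_inter.2 ⟨h, Finset.mem_union.2 (Or.inr haY)⟩)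
          by_contra hd
          exact hnc ((hQ a hm.1).2 hd)
        · have : x - 1 ∉ B := by
            intro h
            exact hxY ((memY x).2 ⟨hxA, h, hxB⟩)
          have : x - 1 ∉ C := fun h => this (hCB h)
          exact (hQ x hxA).2 this
        · have hnc : a ∉ C := fun h => hnB (hCB h)
          by_contra hd
          exact hnc ((hQ a haA).2 hd)
      · intro x hx
        have hxB := hCB hx
        have hx1 := (hB' x hxB).1
        rw [memg]
        by_cases hxA : x ∈ A
        · by_cases hxY : x ∈ Y
          · exact Or.inl (Finset.mem_inter.2 ⟨hx, Finset.mem_union.2 (Or.inr hxY)⟩)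
          · exact Or.inr (Or.inr (Or.inl ⟨hxA, hxY, hxB⟩))
        · by_cases hx1A : x + 1 ∈ A
          · by_cases hyY : x + 1 ∈ Y
            · refine Or.inr (Or.inl ⟨x + 1, hyY, ?_, by omega⟩)
              intro h
              have hyC := (Finset.mem_inter.1 h).1
              have := (hQ (x + 1) hx1A).1 hyC
              simp only [Nat.add_sub_cancel] at this
              exact this hx
            · refine Or.inr (Or.inr (Or.inr ⟨x + 1, hx1A, hyY, ?_, by omega⟩))
              intro h
              exact hyY ((memY (x + 1)).2 ⟨hx1A, by simpa using hxB, h⟩)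
          · refine Or.inl (Finset.mem_inter.2 ⟨hx, Finset.mem_union.2 (Or.inl ?_)⟩)
            exact (memX x).2 ⟨hxB, hxA, fun h => hx1A h.2⟩
    · -- right inverse : g S ∩ (X ∪ Y) = S
      intro S hS
      rw [Finset.mem_coe, Finset.mem_powerset] at hS
      apply Finset.Subset.antisymm
      · intro x hx
        rw [Finset.mem_inter, memg] at hx
        obtain ⟨hx1, hx2⟩ := hx
        rcases hx1 with h | ⟨a, haY, _, rfl⟩ | ⟨hxA, hxY, _⟩ | ⟨a, haA, _, _, rfl⟩
        · exact h
        · exfalso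
          have haA := hYA haY
          have h1' := (hA' a haA).1
          rcases Finset.mem_union.1 hx2 with h' | h'
          · have := (memX (a - 1)).1 h'
            have hb1 := (hB' _ this.1).1
            refine this.2.2 ⟨by omega, ?_⟩
            have : a - 1 + 1 = a := by omega
            rwa [this]
          · have := hYA h'
            exact hnc1 a haA this
        · exfalso
          rcases Finset.mem_union.1 hx2 with h' | h'
          · exact ((memX x).1 h').2.1 hxA
          · exact hxY h'
        · exfalso
          have h1' := (hA' a haA).1
          rcases Finset.mem_union.1 hx2 with h' | h'
          · have := (memX (a - 1)).1 h'
            have hb1 := (hB' _ this.1).1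
            refine this.2.2 ⟨by omega, ?_⟩
            have : a - 1 + 1 = a := by omega
            rwa [this]
          · exact hnc1 a haA (hYA h')
      · intro x hx
        exact Finset.mem_inter.2 ⟨(memg S x).2 (Or.inl hx), hS hx⟩
  · -- no valid C if A ⊄ B ∪ (B+1)
    intro hns
    rw [key, Finset.card_eq_zero, Finset.filter_eq_empty_iff]
    intro C hC
    rw [Finset.mem_powerset] at hC
    intro hcontra
    obtain ⟨a, ha, hna⟩ := Finset.not_subset.1 hns
    have h1 := (hA' a ha).1
    have h2 := (hA' a ha).2
    rw [Finset.mem_union, mem_shiftUp' h1] at hna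
    push_neg at hna
    by_cases hc : a ∈ C
    · exact hna.1 (hC hc)
    · have hd : a - 1 ∈ C := by
        by_contra hd
        exact hc ((hcontra a ha).2 hd)
      exact hna.2 (by omega) (hC hd)
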